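/- Let P_0, P_1, P_2 be the unique polynomials of degree at most 2 interpolating a function u at the stencils {x_{i-2},x_{i-1},x_i}, {x_{i-1},x_i,x_{i+1}}, {x_i,x_{i+1},x_{i+2}} respectively, on a uniform grid of spacing h. Then the combination C_0(x)P_0(x) + C_1(x)P_1(x) + C_2(x)P_2(x), with C_0(x)=(x-x_{i+1})(x-x_{i+2})/(12h^2), C_1(x)=-(x-x_{i-2})(x-x_{i+2})/(6h^2), C_2(x)=(x-x_{i-2})(x-x_{i-1})/(12h^2), equals the unique polynomial of degree at most 4 interpolating u at the five points x_{i-2},...,x_{i+2}. -/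

import Mathlib

open Polynomial

/-- The combination C₀P₀ + C₁P₁ + C₂P₂ of the three quadratic substencil interpolants,
with the position-dependent WENO linear weights, reproduces the unique degree ≤ 4
Lagrange interpolant on the five-point big stencil. -/
theorem weno_combination_eq_lagrange (h x₀ : ℝ) (hh : 0 < h) (i : ℤ)
    (x : ℤ → ℝ) (hx : ∀ j : ℤ, x j = x₀ + (j : ℝ) * h)
    (u : ℝ → ℝ) (P0 P1 P2 Q : Polynomial ℝ)
    (hP0d : P0.degree ≤ 2) (hP1d : P1.degree ≤ 2) (hP2d : P2.degree ≤ 2)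
    (hQd : Q.degree ≤ 4)
    (hP0 : ∀ j ∈ ({i - 2, i - 1, i} : Set ℤ), P0.eval (x j) = u (x j))
    (hP1 : ∀ j ∈ ({i - 1, i, i + 1} : Set ℤ), P1.eval (x j) = u (x j))
    (hP2 : ∀ j ∈ ({i, i + 1, i + 2} : Set ℤ), P2.eval (x j) = u (x j))
    (hQ : ∀ j ∈ ({i - 2, i - 1, i, i + 1, i + 2} : Set ℤ), Q.eval (x j) = u (x j)) :
    ∀ t : ℝ,
      ((t - x (i + 1)) * (t - x (i + 2)) / (12 * h ^ 2)) * P0.eval t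
        + (-((t - x (i - 2)) * (t - x (i + 2))) / (6 * h ^ 2)) * P1.eval t
        + ((t - x (i - 2)) * (t - x (i - 1)) / (12 * h ^ 2)) * P2.eval t
      = Q.eval t := by
  have hne : h ≠ 0 := ne_of_gt hh
  set R : Polynomial ℝ :=
      C (1 / (12 * h ^ 2)) * ((X - C (x (i + 1))) * (X - C (x (i + 2)))) * P0
      + C (-(1 / (6 * h ^ 2))) * ((X - C (x (i - 2))) * (X - C (x (i + 2)))) * P1
      + C (1 / (12 * h ^ 2)) * ((X - C (x (i - 2))) * (X - C (x (i - 1)))) * P2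
      - Q with hR
  -- degree bound
  have hquad : ∀ a b : ℝ, ((X - C a) * (X - C b) : Polynomial ℝ).degree ≤ 2 := by
    intro a b
    refine (degree_mul_le _ _).trans ?_
    rw [degree_X_sub_C, degree_X_sub_C]
    norm_num
  have hterm : ∀ (c a b : ℝ) (P : Polynomial ℝ), P.degree ≤ 2 →
      (C c * ((X - C a) * (X - C b)) * P).degree ≤ 4 := by
    intro c a b P hP
    refine (degree_mul_le _ _).trans ?_
    have h1 : (C c * ((X - C a) * (X - C b))).degree ≤ 2 := by
      refine (degree_mul_le _ _).trans ?_
      have := hquad a b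
      have hc : (C c : Polynomial ℝ).degree ≤ 0 := degree_C_le
      calc (C c : Polynomial ℝ).degree + ((X - C a) * (X - C b)).degree
          ≤ 0 + 2 := add_le_add hc this
        _ = 2 := by norm_num
    calc (C c * ((X - C a) * (X - C b))).degree + P.degree ≤ 2 + 2 :=
          add_le_add h1 hP
      _ = 4 := by norm_num
  have hRdeg : R.degree ≤ 4 := by
    rw [hR]
    refine (degree_sub_le _ _).trans ?_
    refine max_le ?_ hQd
    refine (degree_add_le _ _).trans (max_le ((degree_add_le _ _).trans (max_le ?_ ?_)) ?_)
    · exact hterm _ _ _ _ hP0d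
    · exact hterm _ _ _ _ hP1d
    · exact hterm _ _ _ _ hP2d
  -- the five nodes as a finset
  have hxinj : ∀ j k : ℤ, j ≠ k → x j ≠ x k := by
    intro j k hjk
    rw [hx j, hx k]
    intro hcon
    have hcon' : ((j : ℝ) - k) * h = 0 := by linarith
    rcases mul_eq_zero.mp hcon' with hcon | hcon
    · exact hjk (by exact_mod_cast sub_eq_zero.mp hcon)
    · exact hne hcon
  have heval : ∀ j ∈ ({i - 2, i - 1, i, i + 1, i + 2} : Set ℤ), R.eval (x j) = 0 := by
    intro j hj
    have hq := hQ j hj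
    simp only [Set.mem_insert_iff, Set.mem_singleton_iff] at hj
    rcases hj with rfl | rfl | hj3 | rfl | rfl
    · have h0 := hP0 (i - 2) (by left; rfl)
      simp only [hR, eval_sub, eval_add, eval_mul, eval_C, eval_X]
      rw [h0, hq, hx (i - 2), hx (i + 1), hx (i + 2), hx (i - 1)]
      push_cast
      field_simp
      ring
    · have h0 := hP0 (i - 1) (by right; left; rfl)
      have h1 := hP1 (i - 1) (by left; rfl)
      simp only [hR, eval_sub, eval_add, eval_mul, eval_C, eval_X]
      rw [h0, h1, hq, hx (i - 2), hx (i + 1), hx (i + 2), hx (i - 1)]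
      push_cast
      field_simp
      ring
    · rw [hj3] at hq ⊢
      have h0 := hP0 i (by right; right; rfl)
      have h1 := hP1 i (by right; left; rfl)
      have h2 := hP2 i (by left; rfl)
      simp only [hR, eval_sub, eval_add, eval_mul, eval_C, eval_X]
      rw [h0, h1, h2, hq, hx (i - 2), hx (i + 1), hx (i + 2), hx (i - 1), hx i]
      push_cast
      field_simp
      ring
    · have h1 := hP1 (i + 1) (by right; right; rfl)
      have h2 := hP2 (i + 1) (by right; left; rfl)
      simp only [hR, eval_sub, eval_add, eval_mul, eval_C, eval_X]
      rw [h1, h2, hq, hx (i - 2), hx (i + 1), hx (i + 2), hx (i - 1)]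
      push_cast
      field_simp
      ring
    · have h2 := hP2 (i + 2) (by right; right; rfl)
      simp only [hR, eval_sub, eval_add, eval_mul, eval_C, eval_X]
      rw [h2, hq, hx (i - 2), hx (i + 1), hx (i + 2), hx (i - 1)]
      push_cast
      field_simp
      ring
  have hR0 : R = 0 := by
    apply Polynomial.eq_zero_of_natDegree_lt_card_of_eval_eq_zero'
      R ({x (i - 2), x (i - 1), x i, x (i + 1), x (i + 2)} : Finset ℝ)
    · intro t ht
      simp only [Finset.mem_insert, Finset.mem_singleton] at ht
      rcases ht with rfl | rfl | rfl | rfl | rfl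
      · exact heval (i - 2) (by left; rfl)
      · exact heval (i - 1) (by right; left; rfl)
      · exact heval i (by right; right; left; rfl)
      · exact heval (i + 1) (by right; right; right; left; rfl)
      · exact heval (i + 2) (by right; right; right; right; rfl)
    · have hcard : ({x (i - 2), x (i - 1), x i, x (i + 1), x (i + 2)} : Finset ℝ).card = 5 := by
        rw [Finset.card_insert_of_notMem, Finset.card_insert_of_notMem,
          Finset.card_insert_of_notMem, Finset.card_insert_of_notMem,
          Finset.card_singleton]
        · simp only [Finset.mem_singleton]
          exact hxinj _ _ (by omega)
        · simp only [Finset.mem_insert, Finset.mem_singleton]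
          push_neg
          exact ⟨hxinj _ _ (by omega), hxinj _ _ (by omega)⟩
        · simp only [Finset.mem_insert, Finset.mem_singleton]
          push_neg
          exact ⟨hxinj _ _ (by omega), hxinj _ _ (by omega), hxinj _ _ (by omega)⟩
        · simp only [Finset.mem_insert, Finset.mem_singleton]
          push_neg
          exact ⟨hxinj _ _ (by omega), hxinj _ _ (by omega), hxinj _ _ (by omega),
            hxinj _ _ (by omega)⟩
      rw [hcard]
      have : R.natDegree ≤ 4 := natDegree_le_iff_degree_le.mpr hRdeg
      omega
  intro t
  have key : R.eval t = 0 := by rw [hR0]; simp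
  simp only [hR, eval_sub, eval_add, eval_mul, eval_C, eval_X] at key
  linear_combination key
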